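/- Let F : ℝ^n → ℝ be differentiable with L-Lipschitz gradient and bounded below by F*. Let 0 < η ≤ 1/L and define gradient-descent iterates θ_{t+1} = θ_t − η·∇F(θ_t) from an arbitrary initial point θ_0. Then the series ∑_{t=0}^{∞} ‖∇F(θ_t)‖² converges (with sum at most 2·(F(θ_0) − F*)/η), and consequently ∇F(θ_t) → 0 as t → ∞. -/

import Mathlib

open Filter Topology

local notation "⟪" x ", " y "⟫" => @inner ℝ _ _ x y

lemma hasDerivAt_comp_line {n : ℕ} {F : EuclideanSpace ℝ (Fin n) → ℝ}
    (hF : Differentiable ℝ F) (x v : EuclideanSpace ℝ (Fin n)) (t : ℝ) :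
    HasDerivAt (fun s : ℝ => F (x + s • v)) ⟪gradient F (x + t • v), v⟫ t := by
  have hc : HasDerivAt (fun s : ℝ => x + s • v) v t := by
    have := ((hasDerivAt_id t).smul_const v).const_add x
    simpa using this
  have hg := (hF (x + t • v)).hasGradientAt
  have hfd : HasFDerivAt F (InnerProductSpace.toDual ℝ _ (gradient F (x + t • v))) (x + t • v) := hg
  have := hfd.comp_hasDerivAt t hc
  rw [InnerProductSpace.toDual_apply_apply] at this
  exact this

/-- Descent lemma. -/
lemma descent {n : ℕ} {F : EuclideanSpace ℝ (Fin n) → ℝ} {L : ℝ}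
    (hF : Differentiable ℝ F)
    (hL : ∀ x y, ‖gradient F x - gradient F y‖ ≤ L * ‖x - y‖) (hL0 : 0 ≤ L)
    (x v : EuclideanSpace ℝ (Fin n)) :
    F (x + v) ≤ F x + ⟪gradient F x, v⟫ + L / 2 * ‖v‖ ^ 2 := by
  set φ : ℝ → ℝ := fun t => F (x + t • v) - t * ⟪gradient F x, v⟫ - t ^ 2 * (L / 2 * ‖v‖ ^ 2)
    with hφ
  have hd : ∀ t : ℝ, HasDerivAt φ
      (⟪gradient F (x + t • v), v⟫ - ⟪gradient F x, v⟫ - 2 * t * (L / 2 * ‖v‖ ^ 2)) t := by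
    intro t
    have h1 := hasDerivAt_comp_line hF x v t
    have h2 : HasDerivAt (fun s : ℝ => s * ⟪gradient F x, v⟫) ⟪gradient F x, v⟫ t := by
      simpa using (hasDerivAt_id t).mul_const _
    have h3 : HasDerivAt (fun s : ℝ => s ^ 2 * (L / 2 * ‖v‖ ^ 2)) (2 * t * (L / 2 * ‖v‖ ^ 2)) t := by
      simpa using ((hasDerivAt_pow 2 t).mul_const (L / 2 * ‖v‖ ^ 2))
    exact (h1.sub h2).sub h3
  have hmono : AntitoneOn φ (Set.Icc (0:ℝ) 1) := by
    apply antitoneOn_of_deriv_nonpos (convex_Icc 0 1)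
    · exact fun t _ => (hd t).differentiableAt.continuousAt.continuousWithinAt
    · intro t ht
      exact (hd t).differentiableAt.differentiableWithinAt
    · intro t ht
      rw [interior_Icc] at ht
      rw [(hd t).deriv]
      have hinner : ⟪gradient F (x + t • v), v⟫ - ⟪gradient F x, v⟫
          ≤ L * t * ‖v‖ ^ 2 := by
        have h1 : ⟪gradient F (x + t • v) - gradient F x, v⟫
            ≤ ‖gradient F (x + t • v) - gradient F x‖ * ‖v‖ :=
          real_inner_le_norm _ _
        have h2 : ‖gradient F (x + t • v) - gradient F x‖ ≤ L * (t * ‖v‖) := by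
          have := hL (x + t • v) x
          simpa [norm_smul, abs_of_pos ht.1] using this
        have h3 : ⟪gradient F (x + t • v) - gradient F x, v⟫
            = ⟪gradient F (x + t • v), v⟫ - ⟪gradient F x, v⟫ := inner_sub_left _ _ _
        nlinarith [norm_nonneg v]
      nlinarith
  have h01 : φ 1 ≤ φ 0 := hmono (by norm_num) (by norm_num) (by norm_num)
  simp only [hφ] at h01
  push_cast at h01
  simp only [one_smul, zero_smul, one_mul, one_pow, add_zero] at h01
  nlinarith

/-- Gradient descent with constant step size `0 < η ≤ 1/L` on an `L`-Lipschitz-smooth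
objective bounded below has square-summable gradient norms (with explicit sum bound),
hence gradients converging to zero. -/
theorem gradient_descent_sq_summable_grad
    (n : ℕ) (F : EuclideanSpace ℝ (Fin n) → ℝ) (L η Fstar : ℝ)
    (hF : Differentiable ℝ F)
    (hL : ∀ x y, ‖gradient F x - gradient F y‖ ≤ L * ‖x - y‖)
    (hbdd : ∀ x, Fstar ≤ F x)
    (hη0 : 0 < η) (hηL : η ≤ 1 / L)
    (θ : ℕ → EuclideanSpace ℝ (Fin n))
    (hstep : ∀ t, θ (t + 1) = θ t - η • gradient F (θ t)) :
    Summable (fun t => ‖gradient F (θ t)‖ ^ 2) ∧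
      (∑' t, ‖gradient F (θ t)‖ ^ 2) ≤ 2 * (F (θ 0) - Fstar) / η ∧
      Tendsto (fun t => gradient F (θ t)) atTop (𝓝 0) := by
  have hLpos : 0 < L := by
    by_contra h
    push_neg at h
    rcases lt_or_eq_of_le h with h' | h'
    · have : 1 / L < 0 := one_div_neg.mpr h'
      linarith
    · subst h'; simp at hηL; linarith
  have hLη : L * η ≤ 1 := by
    rw [le_div_iff₀ hLpos] at hηL
    linarith [hηL]
  -- key decrease
  have hdec : ∀ t, F (θ (t + 1)) ≤ F (θ t) - η / 2 * ‖gradient F (θ t)‖ ^ 2 := by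
    intro t
    have h := descent hF hL hLpos.le (θ t) (-(η • gradient F (θ t)))
    have hx : θ t + -(η • gradient F (θ t)) = θ (t + 1) := by
      rw [hstep t]; abel
    rw [hx] at h
    have hi : ⟪gradient F (θ t), -(η • gradient F (θ t))⟫
        = -(η * ‖gradient F (θ t)‖ ^ 2) := by
      rw [inner_neg_right, real_inner_smul_right, real_inner_self_eq_norm_sq]
    have hn : ‖-(η • gradient F (θ t))‖ ^ 2 = η ^ 2 * ‖gradient F (θ t)‖ ^ 2 := by
      rw [norm_neg, norm_smul]
      rw [Real.norm_eq_abs, abs_of_pos hη0]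
      ring
    rw [hi, hn] at h
    nlinarith [sq_nonneg ‖gradient F (θ t)‖]
  have hsum : ∀ N : ℕ, ∑ t ∈ Finset.range N, ‖gradient F (θ t)‖ ^ 2
      ≤ 2 * (F (θ 0) - Fstar) / η := by
    intro N
    have key : η / 2 * ∑ t ∈ Finset.range N, ‖gradient F (θ t)‖ ^ 2 ≤ F (θ 0) - F (θ N) := by
      induction N with
      | zero => simp
      | succ N ih =>
        rw [Finset.sum_range_succ, mul_add]
        have := hdec N
        linarith
    have hb := hbdd (θ N)
    rw [le_div_iff₀ hη0]
    nlinarith [key]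
  have hsummable : Summable (fun t => ‖gradient F (θ t)‖ ^ 2) :=
    summable_of_sum_range_le (fun t => sq_nonneg _) hsum
  refine ⟨hsummable, Real.tsum_le_of_sum_range_le (fun t => sq_nonneg _) hsum, ?_⟩
  have h0 : Tendsto (fun t => ‖gradient F (θ t)‖ ^ 2) atTop (𝓝 0) :=
    hsummable.tendsto_atTop_zero
  rw [tendsto_zero_iff_norm_tendsto_zero]
  have : Tendsto (fun t => Real.sqrt (‖gradient F (θ t)‖ ^ 2)) atTop (𝓝 (Real.sqrt 0)) :=
    (Real.continuous_sqrt.tendsto 0).comp h0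
  simpa [Real.sqrt_sq (norm_nonneg _)] using this
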